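/- arXiv:2101.10967 — 2 statements merged into one kernel-verified Lean document; each statement's English description precedes it below -/
import Mathlib

section
/- Let A be a real N×d matrix with AᵀA positive definite, with largest eigenvalue λ₁ and smallest eigenvalue λ_d > 0; let K* = (AᵀA)⁻¹, b ∈ ℝ^N, and x* the minimizer of x ↦ ½‖Ax−b‖². Let 0 < δ ≤ 1, ρ ∈ [0,1), w_b ∈ ℝ^N, and suppose {x(t)}, {K(t)} satisfy x(t+1) = x(t) − δK(t+1)Aᵀ(Ax(t) − b − w_b) and ‖K(t) − K*‖ ≤ ρᵗ ‖K(0) − K*‖_F for all t (spectral and Frobenius norms respectively). Then, with z(t) = x(t) − x*, for all t ≥ 0: ‖z(t+1)‖ ≤ (1 − δ + δλ₁‖K(0) − K*‖_F ρ^{t+1}) ‖z(t)‖ + δ√λ₁ ‖K(0) − K*‖_F ρ^{t+1} ‖w_b‖ + δ (1/√λ_d) ‖w_b‖. -/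
open Matrix Filter Finset MeasureTheory ProbabilityTheory
open scoped RealInnerProductSpace

/-- The spectral norm (operator 2-norm) of a real rectangular matrix, i.e. the operator
norm of the induced linear map between Euclidean spaces. -/
noncomputable def specNorm {m n : ℕ} (M : Matrix (Fin m) (Fin n) ℝ) : ℝ :=
  ‖LinearMap.toContinuousLinearMap (Matrix.toEuclideanLin M)‖

/-- Matrix-vector multiplication, viewed as a map between Euclidean spaces. -/
noncomputable def mulVecE {m n : ℕ} (M : Matrix (Fin m) (Fin n) ℝ)
    (v : EuclideanSpace ℝ (Fin n)) : EuclideanSpace ℝ (Fin m) :=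
  Matrix.toEuclideanLin M v

/-- The `j`-th column of a matrix, as an element of Euclidean space. -/
noncomputable def colE {m n : ℕ} (M : Matrix (Fin m) (Fin n) ℝ) (j : Fin n) :
    EuclideanSpace ℝ (Fin m) := WithLp.toLp 2 (fun i => M i j)

/-- The Frobenius norm of a matrix: square root of the sum of the squared Euclidean
norms of its columns. -/
noncomputable def frobNorm {m n : ℕ} (M : Matrix (Fin m) (Fin n) ℝ) : ℝ :=
  Real.sqrt (∑ j, ‖colE M j‖ ^ 2)

/-- The l¹-norm of a vector. -/
noncomputable def l1Norm {n : ℕ} (v : EuclideanSpace ℝ (Fin n)) : ℝ := ∑ i, |v i|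

section helpers

variable {m n k : ℕ}

lemma mulVecE_smul (M : Matrix (Fin m) (Fin n) ℝ) (c : ℝ) (v : EuclideanSpace ℝ (Fin n)) :
    mulVecE M (c • v) = c • mulVecE M v := map_smul _ _ _

lemma mulVecE_add (M : Matrix (Fin m) (Fin n) ℝ) (v w : EuclideanSpace ℝ (Fin n)) :
    mulVecE M (v + w) = mulVecE M v + mulVecE M w := map_add _ _ _

lemma mulVecE_sub (M : Matrix (Fin m) (Fin n) ℝ) (v w : EuclideanSpace ℝ (Fin n)) :
    mulVecE M (v - w) = mulVecE M v - mulVecE M w := map_sub _ _ _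

lemma sub_mulVecE (M M' : Matrix (Fin m) (Fin n) ℝ) (v : EuclideanSpace ℝ (Fin n)) :
    mulVecE (M - M') v = mulVecE M v - mulVecE M' v := by
  simp [mulVecE, map_sub]

lemma mulVecE_mulVecE (M : Matrix (Fin m) (Fin n) ℝ) (M' : Matrix (Fin n) (Fin k) ℝ)
    (v : EuclideanSpace ℝ (Fin k)) :
    mulVecE (M * M') v = mulVecE M (mulVecE M' v) := by
  simp [mulVecE, Matrix.toEuclideanLin_apply, Matrix.mulVec_mulVec]

lemma mulVecE_one (v : EuclideanSpace ℝ (Fin n)) :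
    mulVecE (1 : Matrix (Fin n) (Fin n) ℝ) v = v := by
  simp [mulVecE, Matrix.toEuclideanLin_apply, Matrix.one_mulVec]

lemma norm_mulVecE_le (M : Matrix (Fin m) (Fin n) ℝ) (v : EuclideanSpace ℝ (Fin n)) :
    ‖mulVecE M v‖ ≤ specNorm M * ‖v‖ := by
  simpa [mulVecE, specNorm] using
    (LinearMap.toContinuousLinearMap (Matrix.toEuclideanLin M)).le_opNorm v

lemma inner_mulVecE_transpose (A : Matrix (Fin m) (Fin n) ℝ)
    (w : EuclideanSpace ℝ (Fin m)) (v : EuclideanSpace ℝ (Fin n)) :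
    ⟪mulVecE Aᵀ w, v⟫ = ⟪w, mulVecE A v⟫ := by
  have h : Aᵀ = Aᴴ := by
    ext i j; simp [Matrix.conjTranspose_apply]
  rw [mulVecE, h, Matrix.toEuclideanLin_conjTranspose_eq_adjoint]
  exact LinearMap.adjoint_inner_left _ v w

lemma rayleigh_bounds {S : Matrix (Fin n) (Fin n) ℝ} (hS : S.IsHermitian)
    {lo hi : ℝ} (hlo : ∀ i, lo ≤ hS.eigenvalues i) (hhi : ∀ i, hS.eigenvalues i ≤ hi)
    (u : EuclideanSpace ℝ (Fin n)) :
    lo * ‖u‖ ^ 2 ≤ ⟪u, mulVecE S u⟫ ∧ ⟪u, mulVecE S u⟫ ≤ hi * ‖u‖ ^ 2 := by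
  set b := hS.eigenvectorBasis with hb_def
  have hSt : Sᵀ = S := by
    have h1 := hS
    rw [Matrix.IsHermitian] at h1
    have h2 : Sᴴ = Sᵀ := by ext i j; simp [Matrix.conjTranspose_apply]
    rw [← h2, h1]
  have hb : ∀ i, mulVecE S (b i) = hS.eigenvalues i • b i := by
    intro i
    ext j
    exact congrFun (hS.mulVec_eigenvectorBasis i) j
  have key : ⟪u, mulVecE S u⟫ = ∑ i, hS.eigenvalues i * ⟪u, b i⟫ ^ 2 := by
    rw [← b.sum_inner_mul_inner u (mulVecE S u)]
    refine Finset.sum_congr rfl fun i _ => ?_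
    have h1 : ⟪b i, mulVecE S u⟫ = hS.eigenvalues i * ⟪u, b i⟫ := by
      calc ⟪b i, mulVecE S u⟫ = ⟪mulVecE Sᵀ (b i), u⟫ := by
            rw [inner_mulVecE_transpose]
        _ = ⟪mulVecE S (b i), u⟫ := by rw [hSt]
        _ = hS.eigenvalues i * ⟪u, b i⟫ := by
            rw [hb i, real_inner_smul_left, real_inner_comm]
    rw [h1]; ring
  have hnorm : ‖u‖ ^ 2 = ∑ i, ⟪u, b i⟫ ^ 2 := by
    have h := b.sum_inner_mul_inner u u
    rw [real_inner_self_eq_norm_sq] at h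
    rw [← h]
    refine Finset.sum_congr rfl fun i _ => ?_
    rw [real_inner_comm u (b i)]; ring
  constructor
  · rw [key, hnorm, Finset.mul_sum]
    exact Finset.sum_le_sum fun i _ =>
      mul_le_mul_of_nonneg_right (hlo i) (sq_nonneg _)
  · rw [key, hnorm, Finset.mul_sum]
    exact Finset.sum_le_sum fun i _ =>
      mul_le_mul_of_nonneg_right (hhi i) (sq_nonneg _)

lemma le_of_sq_le_sq'' {a c : ℝ} (hc : 0 ≤ c) (h : a ^ 2 ≤ c ^ 2) : a ≤ c := by
  nlinarith [abs_nonneg a, le_abs_self a, sq_abs a]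

end helpers

/-- deterministic one-step bound in the proof of Theorem 1 of the paper. -/
theorem ipg_observation_noise_one_step_bound {N d : ℕ}
    (A : Matrix (Fin N) (Fin d) ℝ) (hPD : (Aᵀ * A).PosDef)
    (lam1 lamd : ℝ)
    (hlam1 : IsGreatest (Set.range hPD.isHermitian.eigenvalues) lam1)
    (hlamd : IsLeast (Set.range hPD.isHermitian.eigenvalues) lamd)
    (hlamdpos : 0 < lamd)
    (b : EuclideanSpace ℝ (Fin N)) (xstar : EuclideanSpace ℝ (Fin d))
    (hmin : ∀ y, (1 / 2) * ‖mulVecE A xstar - b‖ ^ 2 ≤ (1 / 2) * ‖mulVecE A y - b‖ ^ 2)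
    (δ : ℝ) (hδ0 : 0 < δ) (hδ1 : δ ≤ 1)
    (ρ : ℝ) (hρ0 : 0 ≤ ρ) (hρ1 : ρ < 1)
    (wb : EuclideanSpace ℝ (Fin N))
    (x : ℕ → EuclideanSpace ℝ (Fin d)) (K : ℕ → Matrix (Fin d) (Fin d) ℝ)
    (hrec : ∀ t, x (t + 1) =
      x t - δ • mulVecE (K (t + 1)) (mulVecE Aᵀ (mulVecE A (x t) - b - wb)))
    (hdecay : ∀ t, specNorm (K t - (Aᵀ * A)⁻¹) ≤ ρ ^ t * frobNorm (K 0 - (Aᵀ * A)⁻¹)) :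
    ∀ t, ‖x (t + 1) - xstar‖ ≤
      (1 - δ + δ * lam1 * frobNorm (K 0 - (Aᵀ * A)⁻¹) * ρ ^ (t + 1)) * ‖x t - xstar‖
        + δ * Real.sqrt lam1 * frobNorm (K 0 - (Aᵀ * A)⁻¹) * ρ ^ (t + 1) * ‖wb‖
        + δ * (1 / Real.sqrt lamd) * ‖wb‖ := by
  have hS := hPD.isHermitian
  set S := Aᵀ * A with hS_def
  set Ks := S⁻¹ with hKs_def
  set F := frobNorm (K 0 - Ks) with hF_def
  have hF : 0 ≤ F := Real.sqrt_nonneg _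
  -- eigenvalue bounds
  have hlo : ∀ i, lamd ≤ hS.eigenvalues i := fun i => hlamd.2 ⟨i, rfl⟩
  have hhi : ∀ i, hS.eigenvalues i ≤ lam1 := fun i => hlam1.2 ⟨i, rfl⟩
  have hlam1pos : 0 < lam1 := by
    obtain ⟨i, hi⟩ := hlam1.1
    calc (0:ℝ) < lamd := hlamdpos
      _ ≤ hS.eigenvalues i := hlo i
      _ = lam1 := hi
  have hs1 : 0 ≤ Real.sqrt lam1 := Real.sqrt_nonneg _
  -- determinant invertibility
  have hdet : IsUnit S.det := hPD.det_pos.ne'.isUnit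
  -- Rayleigh
  have ray := fun u => rayleigh_bounds hS hlo hhi u
  -- ‖A u‖² = ⟪u, S u⟫
  have hAsq : ∀ u : EuclideanSpace ℝ (Fin d), ‖mulVecE A u‖ ^ 2 = ⟪u, mulVecE S u⟫ := by
    intro u
    rw [hS_def, mulVecE_mulVecE, real_inner_comm, inner_mulVecE_transpose]
    exact (real_inner_self_eq_norm_sq _).symm
  -- ‖A u‖ ≤ √lam1 ‖u‖
  have hA_norm : ∀ u : EuclideanSpace ℝ (Fin d), ‖mulVecE A u‖ ≤ Real.sqrt lam1 * ‖u‖ := by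
    intro u
    refine le_of_sq_le_sq'' (by positivity) ?_
    rw [hAsq u]
    calc ⟪u, mulVecE S u⟫ ≤ lam1 * ‖u‖ ^ 2 := (ray u).2
      _ = (Real.sqrt lam1 * ‖u‖) ^ 2 := by
          rw [mul_pow, Real.sq_sqrt hlam1pos.le]
  -- ‖Aᵀ w‖ ≤ √lam1 ‖w‖
  have hAt_norm : ∀ w : EuclideanSpace ℝ (Fin N),
      ‖mulVecE Aᵀ w‖ ≤ Real.sqrt lam1 * ‖w‖ := by
    intro w
    have h1 : ‖mulVecE Aᵀ w‖ ^ 2 ≤ Real.sqrt lam1 * ‖w‖ * ‖mulVecE Aᵀ w‖ := by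
      have e : ‖mulVecE Aᵀ w‖ ^ 2 = ⟪mulVecE Aᵀ w, mulVecE Aᵀ w⟫ :=
        (real_inner_self_eq_norm_sq _).symm
      rw [e, inner_mulVecE_transpose]
      calc ⟪w, mulVecE A (mulVecE Aᵀ w)⟫ ≤ ‖w‖ * ‖mulVecE A (mulVecE Aᵀ w)‖ :=
            real_inner_le_norm _ _
        _ ≤ ‖w‖ * (Real.sqrt lam1 * ‖mulVecE Aᵀ w‖) := by
            exact mul_le_mul_of_nonneg_left (hA_norm _) (norm_nonneg _)
        _ = Real.sqrt lam1 * ‖w‖ * ‖mulVecE Aᵀ w‖ := by ring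
    rcases eq_or_lt_of_le (norm_nonneg (mulVecE Aᵀ w)) with h0 | h0
    · rw [← h0]; positivity
    · have := le_of_mul_le_mul_right (by nlinarith : ‖mulVecE Aᵀ w‖ * ‖mulVecE Aᵀ w‖ ≤ (Real.sqrt lam1 * ‖w‖) * ‖mulVecE Aᵀ w‖) h0
      exact this
  -- ‖S z‖ ≤ lam1 ‖z‖
  have hS_norm : ∀ z : EuclideanSpace ℝ (Fin d), ‖mulVecE S z‖ ≤ lam1 * ‖z‖ := by
    intro z
    rw [hS_def, mulVecE_mulVecE]
    calc ‖mulVecE Aᵀ (mulVecE A z)‖ ≤ Real.sqrt lam1 * ‖mulVecE A z‖ := hAt_norm _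
      _ ≤ Real.sqrt lam1 * (Real.sqrt lam1 * ‖z‖) :=
          mul_le_mul_of_nonneg_left (hA_norm z) hs1
      _ = lam1 * ‖z‖ := by rw [← mul_assoc, Real.mul_self_sqrt hlam1pos.le]
  -- S S⁻¹ = id and S⁻¹ S = id as maps
  have hSSinv : ∀ v : EuclideanSpace ℝ (Fin d), mulVecE S (mulVecE Ks v) = v := by
    intro v
    rw [← mulVecE_mulVecE, hKs_def, Matrix.mul_nonsing_inv S hdet, mulVecE_one]
  have hSinvS : ∀ v : EuclideanSpace ℝ (Fin d), mulVecE Ks (mulVecE S v) = v := by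
    intro v
    rw [← mulVecE_mulVecE, hKs_def, Matrix.nonsing_inv_mul S hdet, mulVecE_one]
  -- ‖Ks Aᵀ w‖ ≤ (1/√lamd) ‖w‖
  have hKs_norm : ∀ w : EuclideanSpace ℝ (Fin N),
      ‖mulVecE Ks (mulVecE Aᵀ w)‖ ≤ 1 / Real.sqrt lamd * ‖w‖ := by
    intro w
    set u := mulVecE Ks (mulVecE Aᵀ w) with hu_def
    have hSu : mulVecE S u = mulVecE Aᵀ w := hSSinv _
    have h1 : ⟪u, mulVecE S u⟫ = ⟪mulVecE A u, w⟫ := by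
      rw [hSu, real_inner_comm, inner_mulVecE_transpose, real_inner_comm]
    have hAu2 : ‖mulVecE A u‖ ^ 2 = ⟪mulVecE A u, w⟫ := (hAsq u).trans h1
    have hAu_le : ‖mulVecE A u‖ ^ 2 ≤ ‖w‖ ^ 2 := by
      have h2 : ‖mulVecE A u‖ ^ 2 ≤ ‖mulVecE A u‖ * ‖w‖ := by
        rw [hAu2]; exact real_inner_le_norm _ _
      nlinarith [norm_nonneg (mulVecE A u), norm_nonneg w]
    have hlamd_u : lamd * ‖u‖ ^ 2 ≤ ‖w‖ ^ 2 := by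
      calc lamd * ‖u‖ ^ 2 ≤ ⟪u, mulVecE S u⟫ := (ray u).1
        _ = ‖mulVecE A u‖ ^ 2 := (hAsq u).symm
        _ ≤ ‖w‖ ^ 2 := hAu_le
    refine le_of_sq_le_sq'' (by positivity) ?_
    have hsd : Real.sqrt lamd > 0 := Real.sqrt_pos.mpr hlamdpos
    have : (1 / Real.sqrt lamd * ‖w‖) ^ 2 = ‖w‖ ^ 2 / lamd := by
      rw [mul_pow, div_pow, one_pow, Real.sq_sqrt hlamdpos.le]; ring
    rw [this, le_div_iff₀ hlamdpos]
    nlinarith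
  -- normal equation
  have hgrad : mulVecE Aᵀ (mulVecE A xstar - b) = 0 := by
    have key : ∀ v : EuclideanSpace ℝ (Fin d), ⟪mulVecE A v, mulVecE A xstar - b⟫ = 0 := by
      intro v
      set c := ⟪mulVecE A v, mulVecE A xstar - b⟫ with hc_def
      set C := ‖mulVecE A v‖ ^ 2 with hC_def
      have hC : 0 ≤ C := by positivity
      have hq : ∀ s : ℝ, 0 ≤ 2 * s * c + s ^ 2 * C := by
        intro s
        have h := hmin (xstar + s • v)
        have hexp : ‖mulVecE A (xstar + s • v) - b‖ ^ 2
            = ‖mulVecE A xstar - b‖ ^ 2 + (2 * s * c + s ^ 2 * C) := by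
          rw [mulVecE_add, mulVecE_smul]
          have e : mulVecE A xstar + s • mulVecE A v - b
              = (mulVecE A xstar - b) + s • mulVecE A v := by abel
          rw [e, norm_add_sq_real, real_inner_smul_right, norm_smul]
          rw [hc_def, hC_def, real_inner_comm]
          simp [mul_pow]
          ring
        rw [hexp] at h
        linarith
      have hC1 : (0:ℝ) < C + 1 := by linarith
      have h2 := hq (-(c / (C + 1)))
      have hid : 2 * (-(c / (C + 1))) * c + (-(c / (C + 1))) ^ 2 * C
          = (c ^ 2 * (C - 2 * (C + 1))) / (C + 1) ^ 2 := by
        field_simp; ring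
      rw [hid] at h2
      have hden : (0:ℝ) < (C + 1) ^ 2 := by positivity
      have hnum : 0 ≤ c ^ 2 * (C - 2 * (C + 1)) := by
        have := (le_div_iff₀ hden).mp h2
        linarith [this]
      have hc2 : c ^ 2 ≤ 0 := by nlinarith
      have : c ^ 2 = 0 := le_antisymm hc2 (sq_nonneg c)
      exact pow_eq_zero_iff (by norm_num) |>.mp this
    have h0 : ⟪mulVecE Aᵀ (mulVecE A xstar - b), mulVecE Aᵀ (mulVecE A xstar - b)⟫ = (0:ℝ) := by
      rw [inner_mulVecE_transpose, real_inner_comm]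
      exact key _
    exact inner_self_eq_zero.mp h0
  -- main loop
  intro t
  set z := x t - xstar with hz_def
  set Kt := K (t + 1) - Ks with hKt_def
  have hxt : x t = z + xstar := by rw [hz_def]; abel
  have hz' : x (t + 1) - xstar =
      (1 - δ) • z - δ • mulVecE Kt (mulVecE S z)
        + δ • mulVecE Kt (mulVecE Aᵀ wb) + δ • mulVecE Ks (mulVecE Aᵀ wb) := by
    rw [hrec t]
    have e1 : mulVecE A (x t) - b - wb = mulVecE A z + (mulVecE A xstar - b) - wb := by
      rw [hxt, mulVecE_add]; abel
    rw [e1]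
    have e2 : mulVecE Aᵀ (mulVecE A z + (mulVecE A xstar - b) - wb)
        = mulVecE S z - mulVecE Aᵀ wb := by
      rw [mulVecE_sub, mulVecE_add, hgrad, hS_def, mulVecE_mulVecE]
      abel
    rw [e2]
    have e3 : ∀ v : EuclideanSpace ℝ (Fin d),
        mulVecE (K (t + 1)) v = mulVecE Ks v + mulVecE Kt v := by
      intro v
      have := sub_mulVecE (K (t + 1)) Ks v
      rw [← hKt_def] at this
      rw [this]; abel
    rw [mulVecE_sub (K (t + 1)), e3 (mulVecE S z), e3 (mulVecE Aᵀ wb), hSinvS z, hxt]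
    module
  have hdec := hdecay (t + 1)
  rw [← hKt_def] at hdec
  have hρF : 0 ≤ ρ ^ (t + 1) * F := by positivity
  -- the four norm bounds
  have h1 : ‖(1 - δ) • z‖ = (1 - δ) * ‖z‖ := by
    rw [norm_smul, Real.norm_eq_abs, abs_of_nonneg (by linarith : (0:ℝ) ≤ 1 - δ)]
  have h2 : ‖δ • mulVecE Kt (mulVecE S z)‖ ≤ δ * lam1 * F * ρ ^ (t + 1) * ‖z‖ := by
    rw [norm_smul, Real.norm_eq_abs, abs_of_pos hδ0]
    have : ‖mulVecE Kt (mulVecE S z)‖ ≤ (ρ ^ (t + 1) * F) * (lam1 * ‖z‖) := by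
      calc ‖mulVecE Kt (mulVecE S z)‖ ≤ specNorm Kt * ‖mulVecE S z‖ := norm_mulVecE_le _ _
        _ ≤ (ρ ^ (t + 1) * F) * (lam1 * ‖z‖) :=
            mul_le_mul hdec (hS_norm z) (norm_nonneg _) hρF
    calc δ * ‖mulVecE Kt (mulVecE S z)‖ ≤ δ * ((ρ ^ (t + 1) * F) * (lam1 * ‖z‖)) :=
          mul_le_mul_of_nonneg_left this hδ0.le
      _ = δ * lam1 * F * ρ ^ (t + 1) * ‖z‖ := by ring
  have h3 : ‖δ • mulVecE Kt (mulVecE Aᵀ wb)‖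
      ≤ δ * Real.sqrt lam1 * F * ρ ^ (t + 1) * ‖wb‖ := by
    rw [norm_smul, Real.norm_eq_abs, abs_of_pos hδ0]
    have : ‖mulVecE Kt (mulVecE Aᵀ wb)‖ ≤ (ρ ^ (t + 1) * F) * (Real.sqrt lam1 * ‖wb‖) := by
      calc ‖mulVecE Kt (mulVecE Aᵀ wb)‖ ≤ specNorm Kt * ‖mulVecE Aᵀ wb‖ := norm_mulVecE_le _ _
        _ ≤ (ρ ^ (t + 1) * F) * (Real.sqrt lam1 * ‖wb‖) :=
            mul_le_mul hdec (hAt_norm wb) (norm_nonneg _) hρF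
    calc δ * ‖mulVecE Kt (mulVecE Aᵀ wb)‖
        ≤ δ * ((ρ ^ (t + 1) * F) * (Real.sqrt lam1 * ‖wb‖)) :=
          mul_le_mul_of_nonneg_left this hδ0.le
      _ = δ * Real.sqrt lam1 * F * ρ ^ (t + 1) * ‖wb‖ := by ring
  have h4 : ‖δ • mulVecE Ks (mulVecE Aᵀ wb)‖ ≤ δ * (1 / Real.sqrt lamd) * ‖wb‖ := by
    rw [norm_smul, Real.norm_eq_abs, abs_of_pos hδ0, mul_assoc]
    exact mul_le_mul_of_nonneg_left (hKs_norm wb) hδ0.le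
  have htri : ‖x (t + 1) - xstar‖
      ≤ ‖(1 - δ) • z‖ + ‖δ • mulVecE Kt (mulVecE S z)‖
        + ‖δ • mulVecE Kt (mulVecE Aᵀ wb)‖ + ‖δ • mulVecE Ks (mulVecE Aᵀ wb)‖ := by
    rw [hz']
    calc ‖(1 - δ) • z - δ • mulVecE Kt (mulVecE S z)
          + δ • mulVecE Kt (mulVecE Aᵀ wb) + δ • mulVecE Ks (mulVecE Aᵀ wb)‖
        ≤ ‖(1 - δ) • z - δ • mulVecE Kt (mulVecE S z) + δ • mulVecE Kt (mulVecE Aᵀ wb)‖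
          + ‖δ • mulVecE Ks (mulVecE Aᵀ wb)‖ := norm_add_le _ _
      _ ≤ ‖(1 - δ) • z - δ • mulVecE Kt (mulVecE S z)‖ + ‖δ • mulVecE Kt (mulVecE Aᵀ wb)‖
          + ‖δ • mulVecE Ks (mulVecE Aᵀ wb)‖ := by
            gcongr; exact norm_add_le _ _
      _ ≤ ‖(1 - δ) • z‖ + ‖δ • mulVecE Kt (mulVecE S z)‖ + ‖δ • mulVecE Kt (mulVecE Aᵀ wb)‖
          + ‖δ • mulVecE Ks (mulVecE Aᵀ wb)‖ := by
            gcongr; exact norm_sub_le _ _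
  have hfinal : (1 - δ) * ‖z‖ + δ * lam1 * F * ρ ^ (t + 1) * ‖z‖
      + δ * Real.sqrt lam1 * F * ρ ^ (t + 1) * ‖wb‖ + δ * (1 / Real.sqrt lamd) * ‖wb‖
      = (1 - δ + δ * lam1 * F * ρ ^ (t + 1)) * ‖z‖
        + δ * Real.sqrt lam1 * F * ρ ^ (t + 1) * ‖wb‖
        + δ * (1 / Real.sqrt lamd) * ‖wb‖ := by ring
  linarith [htri, h2, h3, h4, h1.le, h1.ge]
end

section
/- Let A be a real N×d matrix with AᵀA positive definite with largest eigenvalue λ₁, let K* = (AᵀA)⁻¹, b ∈ ℝ^N, and x* the minimizer of x ↦ ½‖Ax−b‖². Let 0 < δ ≤ 1, x, w ∈ ℝ^d, K^o ∈ ℝ^{d×d}, and set x^o = x + w, z = x − x*, z^o = x^o − x*, K̃^o = K^o − K*. If x⁺ = x^o − δK^o Aᵀ(A x^o − b), then (i) x⁺ − x* = (I − δK^o AᵀA) z^o, and (ii) ‖x⁺ − x*‖ ≤ (1 − δ + δλ₁‖K̃^o‖)(‖z‖ + ‖w‖), where ‖·‖ denotes the Euclidean norm on vectors and the spectral norm on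 matrices. -/
open Matrix Filter Finset MeasureTheory ProbabilityTheory

open scoped RealInnerProductSpace

section IPGAux

open Matrix

lemma ipg_mulVecE_mul {m n k : ℕ} (M : Matrix (Fin m) (Fin n) ℝ) (P : Matrix (Fin n) (Fin k) ℝ)
    (v : EuclideanSpace ℝ (Fin k)) : mulVecE (M * P) v = mulVecE M (mulVecE P v) := by
  ext i
  simp [mulVecE, Matrix.toEuclideanLin_apply, Matrix.mulVec_mulVec]

lemma ipg_mulVecE_sub_mat {m n : ℕ} (M P : Matrix (Fin m) (Fin n) ℝ)
    (v : EuclideanSpace ℝ (Fin n)) : mulVecE (M - P) v = mulVecE M v - mulVecE P v := by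
  simp [mulVecE, map_sub]

lemma ipg_mulVecE_smul_mat {m n : ℕ} (c : ℝ) (M : Matrix (Fin m) (Fin n) ℝ)
    (v : EuclideanSpace ℝ (Fin n)) : mulVecE (c • M) v = c • mulVecE M v := by
  simp [mulVecE, _root_.map_smul]

lemma ipg_mulVecE_one {n : ℕ} (v : EuclideanSpace ℝ (Fin n)) : mulVecE 1 v = v := by
  ext i
  simp [mulVecE, Matrix.toEuclideanLin_apply]

lemma ipg_mulVecE_sub_vec {m n : ℕ} (M : Matrix (Fin m) (Fin n) ℝ)
    (u v : EuclideanSpace ℝ (Fin n)) : mulVecE M (u - v) = mulVecE M u - mulVecE M v := by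
  simp [mulVecE, map_sub]

lemma ipg_mulVecE_add_vec {m n : ℕ} (M : Matrix (Fin m) (Fin n) ℝ)
    (u v : EuclideanSpace ℝ (Fin n)) : mulVecE M (u + v) = mulVecE M u + mulVecE M v := by
  simp [mulVecE, map_add]

lemma ipg_adj_rel {m n : ℕ} (M : Matrix (Fin m) (Fin n) ℝ) (u : EuclideanSpace ℝ (Fin n))
    (v : EuclideanSpace ℝ (Fin m)) : ⟪mulVecE M u, v⟫ = ⟪u, mulVecE Mᵀ v⟫ := by
  have h : Matrix.toEuclideanLin Mᵀ = LinearMap.adjoint (Matrix.toEuclideanLin M) := by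
    rw [← Matrix.conjTranspose_eq_transpose_of_trivial,
      Matrix.toEuclideanLin_conjTranspose_eq_adjoint]
  simp [mulVecE, h, LinearMap.adjoint_inner_right]

lemma ipg_norm_mulVecE_le {m n : ℕ} (M : Matrix (Fin m) (Fin n) ℝ)
    (v : EuclideanSpace ℝ (Fin n)) : ‖mulVecE M v‖ ≤ specNorm M * ‖v‖ := by
  simpa [mulVecE, specNorm] using (LinearMap.toContinuousLinearMap (Matrix.toEuclideanLin M)).le_opNorm v

lemma ipg_herm_bound {d : ℕ} {M : Matrix (Fin d) (Fin d) ℝ} (hM : M.IsHermitian) {c : ℝ}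
    (hc : 0 ≤ c) (h : ∀ i, |hM.eigenvalues i| ≤ c) (v : EuclideanSpace ℝ (Fin d)) :
    ‖mulVecE M v‖ ≤ c * ‖v‖ := by
  set b := hM.eigenvectorBasis with hb
  have hadj : ∀ u w : EuclideanSpace ℝ (Fin d), ⟪mulVecE M u, w⟫ = ⟪u, mulVecE M w⟫ := by
    intro u w
    have hMt : Matrix.toEuclideanLin Mᴴ = LinearMap.adjoint (Matrix.toEuclideanLin M) :=
      Matrix.toEuclideanLin_conjTranspose_eq_adjoint M
    rw [hM] at hMt
    calc ⟪mulVecE M u, w⟫ = ⟪LinearMap.adjoint (Matrix.toEuclideanLin M) u, w⟫ := by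
            rw [← hMt]; rfl
      _ = ⟪u, mulVecE M w⟫ := LinearMap.adjoint_inner_left _ _ _
  have hbasis : ∀ i, mulVecE M (b i) = hM.eigenvalues i • b i := by
    intro i
    have h1 := hM.mulVec_eigenvectorBasis i
    ext j
    have := congrFun h1 j
    simpa [mulVecE, Matrix.toEuclideanLin_apply] using this
  have key : ∀ i, b.repr (mulVecE M v) i = hM.eigenvalues i * b.repr v i := by
    intro i
    rw [b.repr_apply_apply, b.repr_apply_apply, ← hadj (b i) v, hbasis i,
      real_inner_smul_left]
  have hv : ‖v‖ = ‖b.repr v‖ := (b.repr.norm_map v).symm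
  have hMv : ‖mulVecE M v‖ = ‖b.repr (mulVecE M v)‖ := (b.repr.norm_map _).symm
  rw [hMv, hv, EuclideanSpace.norm_eq, EuclideanSpace.norm_eq,
    ← Real.sqrt_sq hc, ← Real.sqrt_mul (by positivity)]
  apply Real.sqrt_le_sqrt
  rw [Finset.mul_sum]
  apply Finset.sum_le_sum
  intro i _
  rw [key i]
  have hi := h i
  have h2 : |hM.eigenvalues i| ^ 2 ≤ c ^ 2 := by
    nlinarith [abs_nonneg (hM.eigenvalues i)]
  calc ‖hM.eigenvalues i * b.repr v i‖ ^ 2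
      = |hM.eigenvalues i| ^ 2 * ‖b.repr v i‖ ^ 2 := by
        simp [Real.norm_eq_abs, abs_mul, mul_pow]
    _ ≤ c ^ 2 * ‖b.repr v i‖ ^ 2 :=
        mul_le_mul_of_nonneg_right h2 (by positivity)

lemma ipg_normal_eq {N d : ℕ} (A : Matrix (Fin N) (Fin d) ℝ) (b : EuclideanSpace ℝ (Fin N))
    (xstar : EuclideanSpace ℝ (Fin d))
    (hmin : ∀ y, (1 / 2) * ‖mulVecE A xstar - b‖ ^ 2 ≤ (1 / 2) * ‖mulVecE A y - b‖ ^ 2) :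
    mulVecE Aᵀ (mulVecE A xstar - b) = 0 := by
  by_contra hg
  set g := mulVecE Aᵀ (mulVecE A xstar - b) with hgdef
  set r := mulVecE A xstar - b with hrdef
  set q := ‖g‖ ^ 2 with hq
  set a := ‖mulVecE A g‖ ^ 2 with ha
  have hq0 : 0 < q := pow_pos (norm_pos_iff.mpr hg) 2
  have ha0 : 0 ≤ a := by positivity
  set t := q / (a + 1) with htdef
  have ht0 : 0 < t := by positivity
  have hmin' := hmin (xstar - t • g)
  have hAy : mulVecE A (xstar - t • g) - b = r - t • mulVecE A g := by
    simp [mulVecE, map_sub, _root_.map_smul, hrdef]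
    abel
  rw [hAy] at hmin'
  have hinner : ⟪r, t • mulVecE A g⟫ = t * q := by
    rw [real_inner_smul_right]
    congr 1
    rw [real_inner_comm, ipg_adj_rel, real_inner_self_eq_norm_sq]
  have hexp : ‖r - t • mulVecE A g‖ ^ 2 = ‖r‖ ^ 2 - 2 * (t * q) + t ^ 2 * a := by
    rw [norm_sub_sq_real, hinner, norm_smul, mul_pow]
    simp [ha, Real.norm_eq_abs, abs_of_pos ht0]
  rw [hexp] at hmin'
  have h2 : 2 * (t * q) ≤ t ^ 2 * a := by nlinarith
  have h3 : t * (a + 1) = q := by rw [htdef, div_mul_cancel₀]; positivity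
  nlinarith [sq_nonneg t, mul_pos ht0 hq0]

end IPGAux

/-- one-step error analysis under process noise, proof of Theorem 2 of
the paper. (i) the error identity, and (ii) the resulting norm bound. -/
theorem ipg_process_noise_one_step {N d : ℕ}
    (A : Matrix (Fin N) (Fin d) ℝ) (hPD : (Aᵀ * A).PosDef)
    (lam1 : ℝ)
    (hlam1 : IsGreatest (Set.range hPD.isHermitian.eigenvalues) lam1)
    (b : EuclideanSpace ℝ (Fin N)) (xstar : EuclideanSpace ℝ (Fin d))
    (hmin : ∀ y, (1 / 2) * ‖mulVecE A xstar - b‖ ^ 2 ≤ (1 / 2) * ‖mulVecE A y - b‖ ^ 2)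
    (δ : ℝ) (hδ0 : 0 < δ) (hδ1 : δ ≤ 1)
    (x w : EuclideanSpace ℝ (Fin d)) (Ko : Matrix (Fin d) (Fin d) ℝ)
    (xo : EuclideanSpace ℝ (Fin d)) (hxo : xo = x + w)
    (xplus : EuclideanSpace ℝ (Fin d))
    (hxp : xplus = xo - δ • mulVecE Ko (mulVecE Aᵀ (mulVecE A xo - b))) :
    xplus - xstar = mulVecE (1 - δ • (Ko * (Aᵀ * A))) (xo - xstar) ∧
    ‖xplus - xstar‖ ≤
      (1 - δ + δ * lam1 * specNorm (Ko - (Aᵀ * A)⁻¹)) * (‖x - xstar‖ + ‖w‖) := by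
    classical
  have hHerm := hPD.isHermitian
  set G := Aᵀ * A with hG
  have hdet : IsUnit G.det := hPD.det_pos.ne'.isUnit
  have hKG : G⁻¹ * G = 1 := Matrix.nonsing_inv_mul G hdet
  have hNE : mulVecE Aᵀ (mulVecE A xstar - b) = 0 := ipg_normal_eq A b xstar hmin
  set z := xo - xstar with hz
  have hgrad : mulVecE Aᵀ (mulVecE A xo - b) = mulVecE G z := by
    have hsplit : mulVecE A xo - b = (mulVecE A xstar - b) + mulVecE A z := by
      rw [hz, ipg_mulVecE_sub_vec]
      abel
    rw [hsplit, ipg_mulVecE_add_vec, hNE, zero_add, hG, ipg_mulVecE_mul]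
  have part1 : xplus - xstar = mulVecE (1 - δ • (Ko * G)) z := by
    have hR : mulVecE (1 - δ • (Ko * G)) z = z - δ • mulVecE Ko (mulVecE G z) := by
      rw [ipg_mulVecE_sub_mat, ipg_mulVecE_smul_mat, ipg_mulVecE_mul Ko G, ipg_mulVecE_one]
    rw [hR, hxp, hgrad, hz]
    abel
  refine ⟨part1, ?_⟩
  set Kt := Ko - G⁻¹ with hKt
  have hmat : (1 : Matrix (Fin d) (Fin d) ℝ) - δ • (Ko * G) = (1 - δ) • 1 - δ • (Kt * G) := by
    rw [hKt, sub_mul, hKG]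
    module
  have hsplit2 : mulVecE (1 - δ • (Ko * G)) z = (1 - δ) • z - δ • mulVecE Kt (mulVecE G z) := by
    rw [hmat, ipg_mulVecE_sub_mat, ipg_mulVecE_smul_mat, ipg_mulVecE_smul_mat,
      ipg_mulVecE_one, ipg_mulVecE_mul Kt G]
  have hlam_pos : 0 ≤ lam1 := by
    obtain ⟨i, hi⟩ := hlam1.1
    have h := hPD.eigenvalues_pos i
    rw [hi] at h
    linarith
  have heig : ∀ i, |hHerm.eigenvalues i| ≤ lam1 := by
    intro i
    rw [abs_of_pos (hPD.eigenvalues_pos i)]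
    exact hlam1.2 ⟨i, rfl⟩
  have hGb : ‖mulVecE G z‖ ≤ lam1 * ‖z‖ := ipg_herm_bound hHerm hlam_pos heig z
  have hznorm : ‖z‖ ≤ ‖x - xstar‖ + ‖w‖ := by
    rw [hz, hxo]
    calc ‖x + w - xstar‖ = ‖(x - xstar) + w‖ := by congr 1; abel
      _ ≤ ‖x - xstar‖ + ‖w‖ := norm_add_le _ _
  rw [part1, hsplit2]
  have hs0 : 0 ≤ specNorm Kt := norm_nonneg _
  have hd0 : (0:ℝ) ≤ 1 - δ := by linarith
  have step : ‖(1 - δ) • z - δ • mulVecE Kt (mulVecE G z)‖ ≤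
      (1 - δ) * ‖z‖ + δ * (specNorm Kt * (lam1 * ‖z‖)) := by
    calc ‖(1 - δ) • z - δ • mulVecE Kt (mulVecE G z)‖
        ≤ ‖(1 - δ) • z‖ + ‖δ • mulVecE Kt (mulVecE G z)‖ := norm_sub_le _ _
      _ = (1 - δ) * ‖z‖ + δ * ‖mulVecE Kt (mulVecE G z)‖ := by
          rw [norm_smul, norm_smul, Real.norm_eq_abs, Real.norm_eq_abs,
            abs_of_nonneg hd0, abs_of_pos hδ0]
      _ ≤ (1 - δ) * ‖z‖ + δ * (specNorm Kt * (lam1 * ‖z‖)) := by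
          have h1 : ‖mulVecE Kt (mulVecE G z)‖ ≤ specNorm Kt * (lam1 * ‖z‖) :=
            (ipg_norm_mulVecE_le Kt _).trans (mul_le_mul_of_nonneg_left hGb hs0)
          nlinarith
  refine step.trans ?_
  have heq : (1 - δ) * ‖z‖ + δ * (specNorm Kt * (lam1 * ‖z‖)) =
      (1 - δ + δ * lam1 * specNorm Kt) * ‖z‖ := by ring
  rw [heq]
  apply mul_le_mul_of_nonneg_left hznorm
  nlinarith [mul_nonneg (mul_nonneg hδ0.le hlam_pos) hs0]
end
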